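/- Let G be a finite simple graph and let C be a cycle of G, with a fixed cyclic orientation, such that there is no cycle C' of G with V(C) ⊊ V(C'). Let H be a connected component of G − V(C) and let T = {v ∈ V(C) : v has a neighbor in V(H)}. Then no two vertices that are consecutive on C both belong to T; that is, for every v ∈ T, the successor v⁺ of v on C is not in T. -/

import Mathlib

open SimpleGraph Walk

theorem stmt12 {V : Type*} (G : SimpleGraph V)
    (v₀ : V) (c : G.Walk v₀ v₀) (hc : c.IsCycle)
    (hmax : ∀ (w : V) (c' : G.Walk w w), c'.IsCycle →
      ¬ {u : V | u ∈ c.support} ⊂ {u : V | u ∈ c'.support})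
    (H : Set V)
    (hHdisj : ∀ x ∈ H, x ∉ c.support)
    (hHconn : (G.induce H).Connected)
    (hHmax : ∀ x ∈ H, ∀ y, y ∉ H → y ∉ c.support → ¬ G.Adj x y)
    (T : Set V) (hT : T = {u : V | u ∈ c.support ∧ ∃ w ∈ H, G.Adj u w}) :
    ∀ d ∈ c.darts, d.fst ∈ T → d.snd ∉ T := by
  classical
  subst hT
  rintro d hd ⟨hu, x, hxH, hux⟩ ⟨hv, y, hyH, hvy⟩
  set u := d.fst with hufst
  set v := d.snd with hvsnd
  -- rotate the cycle to start at u
  have hc₂ := hc.rotate hu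
  set c₂ := c.rotate u hu with hc₂def
  have hnotnil : ¬ c₂.Nil := hc₂.not_nil
  -- membership in a closed nonnil walk equals membership in tail of support
  have memtail : ∀ {w : V} (p : G.Walk w w), ¬ p.Nil → ∀ a, a ∈ p.support ↔ a ∈ p.support.tail := by
    intro w p hp a
    obtain ⟨b, hwb, q, rfl⟩ := Walk.not_nil_iff.mp hp
    simp only [support_cons, List.mem_cons, List.tail_cons]
    constructor
    · rintro (rfl | h)
      · exact q.end_mem_support
      · exact h
    · exact Or.inr
  have hmemc₂ : ∀ a, a ∈ c₂.support ↔ a ∈ c.support := by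
    intro a
    rw [memtail c₂ hnotnil, memtail c hc.not_nil, (support_rotate c u hu).mem_iff]
  -- decompose c₂ as cons
  obtain ⟨b, hub, q, hq⟩ := Walk.not_nil_iff.mp hnotnil
  -- identify b = v
  have hdarts : d ∈ c₂.darts := (rotate_darts c u hu).mem_iff.mpr hd
  have hqsupnodup : q.support.Nodup := by
    have := hc₂.2
    rw [hq] at this
    simpa using this
  have hb : b = v := by
    rw [hq, darts_cons] at hdarts
    rcases List.mem_cons.mp hdarts with h | h
    · exact congrArg (fun e : G.Dart => e.snd) h.symm
    · exfalso
      have hmem : u ∈ q.darts.map (·.fst) := List.mem_map.mpr ⟨d, h, hufst.symm⟩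
      rw [Walk.map_fst_darts] at hmem
      have hlast : q.support.getLast q.support_ne_nil = u := q.getLast_support
      have := List.dropLast_append_getLast q.support_ne_nil
      rw [hlast] at this
      rw [← this] at hqsupnodup
      exact (List.disjoint_of_nodup_append hqsupnodup) hmem (List.mem_singleton.mpr rfl)
  subst hb
  -- path from x to y in H
  obtain ⟨p₀⟩ := hHconn.preconnected ⟨x, hxH⟩ ⟨y, hyH⟩
  have hp₀ : (p₀.toPath.1).IsPath := p₀.toPath.2
  set P : G.Walk x y := ((p₀.toPath.1).map
    (SimpleGraph.Embedding.induce H).toHom) with hP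
  have hPpath : P.IsPath :=
    Walk.map_isPath_of_injective (Subtype.val_injective) hp₀
  have hPsup : ∀ a ∈ P.support, a ∈ H := by
    intro a ha
    have ha : a ∈ (p₀.toPath.1.map (SimpleGraph.Embedding.induce H).toHom).support := ha
    rw [Walk.support_map] at ha
    obtain ⟨⟨a', ha'⟩, _, rfl⟩ := List.mem_map.mp ha
    exact ha'
  have hqsup : ∀ a ∈ q.support, a ∈ c.support := by
    intro a ha
    rw [← hmemc₂ a, hq]
    simp [ha]
  have huv : G.Adj u v := d.adj
  -- build the new cycle
  have hyv : G.Adj y v := hvy.symm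
  set W : G.Walk u u := Walk.cons hux (P.append (Walk.cons hyv q)) with hW
  have hWsup : W.support = u :: (P.support ++ q.support) := by
    rw [hW, support_cons, support_append, support_cons, List.tail_cons]
  have hqtrail : q.edges.Nodup ∧ s(u,v) ∉ q.edges := by
    have := hc₂.1.1.1
    rw [hq, edges_cons, List.nodup_cons] at this
    exact ⟨this.2, this.1⟩
  have hWcycle : W.IsCycle := by
    constructor
    constructor
    constructor
    · -- edges nodup
      rw [hW, edges_cons, edges_append, edges_cons, List.nodup_cons, List.nodup_append]
      refine ⟨?_, hPpath.1.1, List.nodup_cons.mpr ⟨?_, hqtrail.1⟩, ?_⟩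
      · rw [List.mem_append, List.mem_cons]
        rintro (h | h | h)
        · exact hHdisj u (hPsup u (P.fst_mem_support_of_mem_edges h)) hu
        · rcases Sym2.eq_iff.mp h with ⟨h1, h2⟩ | ⟨h1, h2⟩
          · exact hHdisj u (h1 ▸ hyH) hu
          · exact huv.ne h1
        · exact hHdisj x hxH (hqsup x (q.snd_mem_support_of_mem_edges h))
      · intro h
        exact hHdisj y hyH (hqsup y (q.fst_mem_support_of_mem_edges h))
      · intro e heP e' heq hee; subst hee
        induction e with
        | h a b =>
          rcases List.mem_cons.mp heq with h | h
          · rcases Sym2.eq_iff.mp h with ⟨h1, h2⟩ | ⟨h1, h2⟩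
            · exact hHdisj v (hPsup b (P.snd_mem_support_of_mem_edges heP) |> (h2 ▸ ·)) hv
            · exact hHdisj v (hPsup a (P.fst_mem_support_of_mem_edges heP) |> (h1 ▸ ·)) hv
          · exact hHdisj a (hPsup a (P.fst_mem_support_of_mem_edges heP))
              (hqsup a (q.fst_mem_support_of_mem_edges h))
    · exact fun h => by simp [hW] at h
    · -- support tail nodup
      rw [hWsup]
      simp only [List.tail_cons]
      rw [List.nodup_append]
      refine ⟨hPpath.2, hqsupnodup, ?_⟩
      intro a haP b haq hab; subst hab
      exact hHdisj a (hPsup a haP) (hqsup a haq)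
  -- contradiction with maximality
  refine hmax u W hWcycle ⟨?_, ?_⟩
  · intro a ha
    simp only [Set.mem_setOf_eq] at ha ⊢
    rw [hWsup]
    rw [← hmemc₂ a, hq] at ha
    simp only [support_cons, List.mem_cons] at ha
    rcases ha with rfl | ha
    · exact List.mem_cons_self
    · exact List.mem_cons.mpr (Or.inr (List.mem_append.mpr (Or.inr ha)))
  · intro hsub
    have : x ∈ {a : V | a ∈ c.support} := hsub (by
      simp only [Set.mem_setOf_eq]
      rw [hWsup]
      exact List.mem_cons.mpr (Or.inr (List.mem_append.mpr (Or.inl P.start_mem_support))))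
    exact hHdisj x hxH this
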